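/- arXiv:2010.11296 — 2 statements merged into one kernel-verified Lean document; each statement's English description precedes it below -/
import Mathlib

section
/- For the forward kinematics map (φ,θ,D) ↦ (x,y,z) with x = d3·cos(θ)·cos(φ) + D, y = d3·sin(φ) + d2, z = -d3·sin(θ)·cos(φ) + d1, the map is injective on the domain φ, θ ∈ (-π/2, π/2), D ∈ ℝ, for d3 > 0. -/
open Real

theorem stmt_1 (d1 d2 d3 : ℝ) (hd3 : 0 < d3) :
    Set.InjOn (fun p : ℝ × ℝ × ℝ =>
      (d3 * Real.cos p.2.1 * Real.cos p.1 + p.2.2,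
       d3 * Real.sin p.1 + d2,
       -d3 * Real.sin p.2.1 * Real.cos p.1 + d1))
      {p : ℝ × ℝ × ℝ | p.1 ∈ Set.Ioo (-(π/2)) (π/2) ∧ p.2.1 ∈ Set.Ioo (-(π/2)) (π/2)} := by
  rintro ⟨φ₁, θ₁, D₁⟩ ⟨hφ₁, hθ₁⟩ ⟨φ₂, θ₂, D₂⟩ ⟨hφ₂, hθ₂⟩ h
  simp only [Prod.mk.injEq] at h
  obtain ⟨hx, hy, hz⟩ := h
  have hsin : Real.sin φ₁ = Real.sin φ₂ := by
    have := hy; nlinarith [this]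
  have hφ : φ₁ = φ₂ :=
    Real.injOn_sin (Set.mem_Icc_of_Ioo hφ₁) (Set.mem_Icc_of_Ioo hφ₂) hsin
  subst hφ
  have hcosφ : 0 < Real.cos φ₁ := Real.cos_pos_of_mem_Ioo hφ₁
  have hsinθ : Real.sin θ₁ = Real.sin θ₂ := by
    have h' : -d3 * Real.sin θ₁ * Real.cos φ₁ = -d3 * Real.sin θ₂ * Real.cos φ₁ := by
      linarith
    have := mul_right_cancel₀ (ne_of_gt hcosφ) h'
    nlinarith
  have hθ : θ₁ = θ₂ :=
    Real.injOn_sin (Set.mem_Icc_of_Ioo hθ₁) (Set.mem_Icc_of_Ioo hθ₂) hsinθ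
  subst hθ
  have hD : D₁ = D₂ := by linarith
  simp [hD]
end

section
/- Under the velocity control law ω_φ = (−k1·e_y + y_r')/(d3·cos(φ)) and ω_θ = (k2·e_z + d3·sin(θ)·sin(φ)·ω_φ − z_r')/(d3·cos(θ)·cos(φ)), the tracking errors satisfy e_y' = −k1·e_y and e_z' = −k2·e_z. -/
open Real

theorem stmt_7 (d1 d2 d3 k1 k2 : ℝ) (hd3 : 0 < d3) (hk1 : 0 < k1) (hk2 : 0 < k2)
    (φ θ ωφ ωθ yr zr yr' zr' : ℝ → ℝ)
    (hrange : ∀ t, φ t ∈ Set.Ioo (-(π/2)) (π/2) ∧ θ t ∈ Set.Ioo (-(π/2)) (π/2))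
    (hφ : ∀ t, HasDerivAt φ (ωφ t) t) (hθ : ∀ t, HasDerivAt θ (ωθ t) t)
    (hyr : ∀ t, HasDerivAt yr (yr' t) t) (hzr : ∀ t, HasDerivAt zr (zr' t) t)
    (y z ey ez : ℝ → ℝ)
    (hy : ∀ t, y t = d3 * Real.sin (φ t) + d2)
    (hz : ∀ t, z t = -d3 * Real.sin (θ t) * Real.cos (φ t) + d1)
    (hey : ∀ t, ey t = y t - yr t) (hez : ∀ t, ez t = z t - zr t)
    (hωφ : ∀ t, ωφ t = (-k1 * ey t + yr' t) / (d3 * Real.cos (φ t)))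
    (hωθ : ∀ t, ωθ t = (k2 * ez t + d3 * Real.sin (θ t) * Real.sin (φ t) * ωφ t - zr' t)
        / (d3 * Real.cos (θ t) * Real.cos (φ t))) :
    (∀ t, HasDerivAt ey (-k1 * ey t) t) ∧ (∀ t, HasDerivAt ez (-k2 * ez t) t) := by
  have hd3' : d3 ≠ 0 := ne_of_gt hd3
  have hcφ : ∀ t, Real.cos (φ t) ≠ 0 := fun t =>
    ne_of_gt (Real.cos_pos_of_mem_Ioo (by simpa using (hrange t).1))
  have hcθ : ∀ t, Real.cos (θ t) ≠ 0 := fun t =>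
    ne_of_gt (Real.cos_pos_of_mem_Ioo (by simpa using (hrange t).2))
  constructor
  · intro t
    have h1 : HasDerivAt y (d3 * (Real.cos (φ t) * ωφ t)) t := by
      rw [funext hy]
      exact ((hφ t).sin.const_mul d3).add_const d2
    have h2 : HasDerivAt ey (d3 * (Real.cos (φ t) * ωφ t) - yr' t) t := by
      rw [funext hey]; exact h1.sub (hyr t)
    have h3 : d3 * (Real.cos (φ t) * ωφ t) = -k1 * ey t + yr' t := by
      rw [hωφ]; field_simp [hcφ t]
    convert h2 using 1
    rw [h3]; ring
  · intro t
    have h1 : HasDerivAt z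
        ((-d3 * (Real.cos (θ t) * ωθ t)) * Real.cos (φ t)
          + (-d3 * Real.sin (θ t)) * (-Real.sin (φ t) * ωφ t)) t := by
      rw [funext hz]
      exact (((hθ t).sin.const_mul (-d3)).mul (hφ t).cos).add_const d1
    have h2 : HasDerivAt ez
        ((-d3 * (Real.cos (θ t) * ωθ t)) * Real.cos (φ t)
          + (-d3 * Real.sin (θ t)) * (-Real.sin (φ t) * ωφ t) - zr' t) t := by
      rw [funext hez]; exact h1.sub (hzr t)
    have h3 : -d3 * (Real.cos (θ t) * ωθ t) * Real.cos (φ t)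
        = -(k2 * ez t + d3 * Real.sin (θ t) * Real.sin (φ t) * ωφ t - zr' t) := by
      rw [hωθ]; field_simp [hcφ t, hcθ t]
    convert h2 using 1
    rw [h3]; ring
end
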